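/- arXiv:1710.09554 — 5 statements merged into one kernel-verified Lean document; each statement's English description precedes it below -/
import Mathlib

section
/- Bias of the SVRG composition gradient estimator (Lemma 1, core estimate): Suppose Assumption 2 holds. Then for all x, x̃ ∈ ℝ^N and every integer A ≥ 1, E_{σ,i}[ ‖(∂Ĝ(σ,x,x̃))^T ∇F_i(Ĝ(σ,x,x̃)) − (∂Ĝ(σ,x,x̃))^T ∇F_i(G(x))‖² ] ≤ 9·B_G⁴ L_F² · (1/A) · ‖x − x̃‖². (Here the factor 9 comes from the deterministic bound ‖∂Ĝ(σ,x,x̃)‖_F ≤ 3B_G and the estimate E_σ‖Ĝ(σ,x,x̃) − G(x)‖² ≤ (B_G²/A)‖x − x̃‖².) -/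
noncomputable section

open Finset
open scoped RealInnerProductSpace

abbrev Euc (N : ℕ) := EuclideanSpace ℝ (Fin N)

/-- Frobenius norm of a linear map between Euclidean spaces: the square root of the
sum of the squared norms of the columns. -/
def frobNorm {N M : ℕ} (T : Euc N →L[ℝ] Euc M) : ℝ :=
  Real.sqrt (∑ j : Fin N, ‖T (EuclideanSpace.single j 1)‖ ^ 2)

/-- The averaged inner function `G = (1/m) ∑ⱼ Gⱼ`. -/
def Gbar {m N M : ℕ} (G : Fin m → Euc N → Euc M) (x : Euc N) : Euc M :=
  (m : ℝ)⁻¹ • ∑ j, G j x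

/-- The averaged Jacobian `∂G = (1/m) ∑ⱼ ∂Gⱼ`. -/
def Jbar {m N M : ℕ} (J : Fin m → Euc N → (Euc N →L[ℝ] Euc M)) (x : Euc N) :
    Euc N →L[ℝ] Euc M :=
  (m : ℝ)⁻¹ • ∑ j, J j x

/-- `Tᵀ v`: the transpose (adjoint) of `T` applied to `v`. -/
def transApp {N M : ℕ} (T : Euc N →L[ℝ] Euc M) (v : Euc M) : Euc N :=
  ContinuousLinearMap.adjoint T v

/-- Assumption 2 of the paper: bounded gradients, Lipschitz gradients, bounded
Jacobians (Frobenius norm), Lipschitz inner functions and Lipschitz Jacobians. -/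
def Assumption2 {n m N M : ℕ} (G : Fin m → Euc N → Euc M)
    (J : Fin m → Euc N → (Euc N →L[ℝ] Euc M))
    (gradF : Fin n → Euc M → Euc M) (BF LF BG LG : ℝ) : Prop :=
  (∀ i y, ‖gradF i y‖ ≤ BF) ∧
  (∀ i y y', ‖gradF i y - gradF i y'‖ ≤ LF * ‖y - y'‖) ∧
  (∀ j x, frobNorm (J j x) ≤ BG) ∧
  (∀ j x x', ‖G j x - G j x'‖ ≤ BG * ‖x - x'‖) ∧
  (∀ j x x', frobNorm (J j x - J j x') ≤ LG * ‖x - x'‖)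

/-- Continuous differentiability of the data, with the prescribed Jacobians and
gradients. -/
def SmoothData {n m N M : ℕ} (Fi : Fin n → Euc M → ℝ) (G : Fin m → Euc N → Euc M)
    (J : Fin m → Euc N → (Euc N →L[ℝ] Euc M)) (gradF : Fin n → Euc M → Euc M) : Prop :=
  (∀ j x, HasFDerivAt (G j) (J j x) x) ∧ (∀ j, Continuous (J j)) ∧
  (∀ i y, HasGradientAt (Fi i) (gradF i y) y) ∧ (∀ i, Continuous (gradF i))

/-- Uniform average over all tuples `σ ∈ {1,…,m}^A`. -/
def Esig {m A : ℕ} (f : (Fin A → Fin m) → ℝ) : ℝ :=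
  (∑ σ : Fin A → Fin m, f σ) / (m ^ A : ℝ)

/-- The SVRG estimator `Ĝ(σ,x,x̃)` of the inner function. -/
def GhatSVRG {m N M : ℕ} (G : Fin m → Euc N → Euc M) {A : ℕ}
    (σ : Fin A → Fin m) (x xt : Euc N) : Euc M :=
  (A : ℝ)⁻¹ • ∑ l, (G (σ l) x - G (σ l) xt) + Gbar G xt

/-- The SVRG estimator `∂Ĝ(σ,x,x̃)` of the Jacobian. -/
def JhatSVRG {m N M : ℕ} (J : Fin m → Euc N → (Euc N →L[ℝ] Euc M)) {A : ℕ}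
    (σ : Fin A → Fin m) (x xt : Euc N) : Euc N →L[ℝ] Euc M :=
  (A : ℝ)⁻¹ • ∑ l, (J (σ l) x - J (σ l) xt) + Jbar J xt

-- decomposition of a vector in Euc N
lemma euc_sum_single {N : ℕ} (v : Euc N) :
    v = ∑ j : Fin N, v j • (EuclideanSpace.single j 1 : Euc N) := by
  ext i
  have h : (∑ j : Fin N, v j • (EuclideanSpace.single j 1 : Euc N)) i
      = ∑ j : Fin N, (v j • (EuclideanSpace.single j 1 : Euc N)) i :=
    by rw [WithLp.ofLp_sum]; exact Finset.sum_apply i Finset.univ _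
  rw [h]
  simp [EuclideanSpace.single_apply]

lemma opNorm_le_frobNorm {N M : ℕ} (T : Euc N →L[ℝ] Euc M) : ‖T‖ ≤ frobNorm T := by
  have hfnn : 0 ≤ frobNorm T := Real.sqrt_nonneg _
  refine ContinuousLinearMap.opNorm_le_bound T hfnn (fun v => ?_)
  have h1 : T v = ∑ j : Fin N, v j • T (EuclideanSpace.single j 1) := by
    conv_lhs => rw [euc_sum_single v]
    rw [map_sum]
    simp
  have h2 : ‖T v‖ ≤ ∑ j : Fin N, |v j| * ‖T (EuclideanSpace.single j 1)‖ := by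
    rw [h1]
    refine (norm_sum_le _ _).trans ?_
    refine Finset.sum_le_sum fun j _ => ?_
    rw [norm_smul]; simp [Real.norm_eq_abs]
  -- Cauchy-Schwarz via inner product on Euc N... use two Euclidean vectors
  set a : Euc N := WithLp.toLp 2 (fun j => |v j| : Fin N → ℝ)
  set b : Euc N := WithLp.toLp 2 (fun j => ‖T (EuclideanSpace.single j 1)‖ : Fin N → ℝ)
  have hab : ⟪a, b⟫ = ∑ j : Fin N, |v j| * ‖T (EuclideanSpace.single j 1)‖ := by
    simp [a, b, PiLp.inner_apply, RCLike.inner_apply, mul_comm]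
  have hcs : ⟪a, b⟫ ≤ ‖a‖ * ‖b‖ := real_inner_le_norm a b
  have hna : ‖a‖ = ‖v‖ := by
    rw [EuclideanSpace.norm_eq, EuclideanSpace.norm_eq]
    congr 1
    refine Finset.sum_congr rfl fun j _ => ?_
    simp [a, sq_abs]
  have hnb : ‖b‖ = frobNorm T := by
    rw [EuclideanSpace.norm_eq, frobNorm]
    congr 1
    refine Finset.sum_congr rfl fun j _ => ?_
    simp [b, sq_abs]
  calc ‖T v‖ ≤ ⟪a, b⟫ := by rw [hab]; exact h2
    _ ≤ ‖a‖ * ‖b‖ := hcs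
    _ = frobNorm T * ‖v‖ := by rw [hna, hnb, mul_comm]

lemma sum_tuple_norm_sq {M m : ℕ} (Z : Fin m → Euc M) (hZ : ∑ j, Z j = 0) (A : ℕ) :
    ∑ σ : Fin A → Fin m, ‖∑ l, Z (σ l)‖ ^ 2
      = (A : ℝ) * (m : ℝ) ^ (A - 1) * ∑ j, ‖Z j‖ ^ 2 := by
  induction A with
  | zero => simp
  | succ A ih =>
    have e := Fin.consEquiv (fun _ : Fin (A+1) => Fin m)
    have hsum : ∑ σ : Fin (A+1) → Fin m, ‖∑ l, Z (σ l)‖ ^ 2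
        = ∑ p : Fin m × (Fin A → Fin m), ‖Z p.1 + ∑ l, Z (p.2 l)‖ ^ 2 := by
      rw [← Equiv.sum_comp (Fin.consEquiv (fun _ : Fin (A+1) => Fin m))]
      refine Finset.sum_congr rfl fun p _ => ?_
      congr 1
      rw [Fin.sum_univ_succ]
      simp [Fin.consEquiv]
    rw [hsum, Fintype.sum_prod_type]
    have expand : ∀ (j : Fin m) (τ : Fin A → Fin m),
        ‖Z j + ∑ l, Z (τ l)‖ ^ 2
          = ‖Z j‖ ^ 2 + 2 * ⟪Z j, ∑ l, Z (τ l)⟫ + ‖∑ l, Z (τ l)‖ ^ 2 :=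
      fun j τ => norm_add_sq_real _ _
    have : ∑ j : Fin m, ∑ τ : Fin A → Fin m, ‖Z j + ∑ l, Z (τ l)‖ ^ 2
        = ∑ j : Fin m, ∑ τ : Fin A → Fin m,
            (‖Z j‖ ^ 2 + 2 * ⟪Z j, ∑ l, Z (τ l)⟫ + ‖∑ l, Z (τ l)‖ ^ 2) := by
      refine Finset.sum_congr rfl fun j _ => Finset.sum_congr rfl fun τ _ => expand j τ
    rw [this]
    have hcard : (Fintype.card (Fin A → Fin m) : ℝ) = (m : ℝ) ^ A := by
      simp [Fintype.card_fun]
    simp only [Finset.sum_add_distrib]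
    have t1 : ∑ j : Fin m, ∑ _τ : Fin A → Fin m, ‖Z j‖ ^ 2
        = (m : ℝ) ^ A * ∑ j, ‖Z j‖ ^ 2 := by
      simp [Finset.sum_const, hcard, Finset.mul_sum, mul_comm]
    have t2 : ∑ j : Fin m, ∑ τ : Fin A → Fin m, 2 * ⟪Z j, ∑ l, Z (τ l)⟫ = 0 := by
      have : ∀ j : Fin m, ∑ τ : Fin A → Fin m, 2 * ⟪Z j, ∑ l, Z (τ l)⟫
          = 2 * ⟪Z j, ∑ τ : Fin A → Fin m, ∑ l, Z (τ l)⟫ := by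
        intro j
        rw [← Finset.mul_sum, ← inner_sum]
      simp only [this]
      rw [← Finset.mul_sum, ← sum_inner]
      rw [hZ]
      simp
    have t3 : ∑ _j : Fin m, ∑ τ : Fin A → Fin m, ‖∑ l, Z (τ l)‖ ^ 2
        = (m : ℝ) * ((A : ℝ) * (m : ℝ) ^ (A - 1) * ∑ j, ‖Z j‖ ^ 2) := by
      rw [ih]
      simp [Finset.sum_const, mul_comm]
    rw [t1, t2, t3]
    rcases Nat.eq_zero_or_pos A with h0 | hpos
    · subst h0; push_cast; norm_num
    · have hmp : (m : ℝ) ^ A = (m : ℝ) * (m : ℝ) ^ (A - 1) := by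
        conv_lhs => rw [← Nat.succ_pred_eq_of_pos hpos]
        rw [pow_succ', Nat.pred_eq_sub_one]
      have hns : A + 1 - 1 = A := rfl
      rw [hns]
      push_cast
      linear_combination (-(∑ j, ‖Z j‖ ^ 2) * ((A : ℝ))) * hmp

lemma Esig_mono {m A : ℕ} {f g : (Fin A → Fin m) → ℝ} (h : ∀ σ, f σ ≤ g σ) :
    (∑ σ : Fin A → Fin m, f σ) / (m ^ A : ℝ) ≤ (∑ σ : Fin A → Fin m, g σ) / (m ^ A : ℝ) := by
  gcongr with σ
  exact h σ

/-- Lemma 1 (core estimate): bias of the SVRG composition gradient estimator. -/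
theorem svrg_gradient_bias_bound
    {n m N M A : ℕ} (hn : 0 < n) (hm : 0 < m) (hA : 0 < A)
    (BF LF BG LG : ℝ) (hBF : 0 < BF) (hLF : 0 < LF) (hBG : 0 < BG) (hLG : 0 < LG)
    (Fi : Fin n → Euc M → ℝ) (G : Fin m → Euc N → Euc M)
    (J : Fin m → Euc N → (Euc N →L[ℝ] Euc M)) (gradF : Fin n → Euc M → Euc M)
    (hsm : SmoothData Fi G J gradF)
    (hA2 : Assumption2 G J gradF BF LF BG LG)
    (x xt : Euc N) :
    (n : ℝ)⁻¹ * ∑ i, Esig (fun σ : Fin A → Fin m =>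
        ‖transApp (JhatSVRG J σ x xt) (gradF i (GhatSVRG G σ x xt)) -
          transApp (JhatSVRG J σ x xt) (gradF i (Gbar G x))‖ ^ 2)
      ≤ 9 * BG ^ 4 * LF ^ 2 * (1 / (A : ℝ)) * ‖x - xt‖ ^ 2 := by
  obtain ⟨hBFb, hLip, hJb, hGlip, hJlip⟩ := hA2
  have hApos : (0:ℝ) < (A:ℝ) := by exact_mod_cast hA
  have hmpos : (0:ℝ) < (m:ℝ) := by exact_mod_cast hm
  set W : Fin m → Euc M := fun j => G j x - G j xt with hW
  set D : Euc M := Gbar G x - Gbar G xt with hD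
  have hmD : ∑ j, W j = (m : ℝ) • D := by
    rw [hD]
    simp only [Gbar, ← smul_sub, ← Finset.sum_sub_distrib, smul_smul,
      mul_inv_cancel₀ (ne_of_gt hmpos), one_smul]
    rfl
  set Z : Fin m → Euc M := fun j => W j - D with hZ
  have hZsum : ∑ j, Z j = 0 := by
    have h1 : ∑ j, Z j = (∑ j, W j) - (m:ℝ) • D := by
      rw [hZ, Finset.sum_sub_distrib, Finset.sum_const, card_univ, Fintype.card_fin]
      congr 1
      exact (Nat.cast_smul_eq_nsmul ℝ m D).symm
    rw [h1, hmD, sub_self]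
  -- the deviation of the SVRG estimator
  have hGdiff : ∀ σ : Fin A → Fin m,
      GhatSVRG G σ x xt - Gbar G x = (A:ℝ)⁻¹ • ∑ l, Z (σ l) := by
    intro σ
    have h1 : ∑ l, Z (σ l) = (∑ l, W (σ l)) - (A:ℝ) • D := by
      rw [hZ]
      simp only
      rw [Finset.sum_sub_distrib, Finset.sum_const, card_univ, Fintype.card_fin]
      congr 1
      exact (Nat.cast_smul_eq_nsmul ℝ A D).symm
    rw [h1, smul_sub, smul_smul, inv_mul_cancel₀ (ne_of_gt hApos), one_smul]
    rw [GhatSVRG, hD]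
    abel
  -- bound on ∑ ‖Z j‖²
  have hWle : ∀ j, ‖W j‖ ^ 2 ≤ BG ^ 2 * ‖x - xt‖ ^ 2 := by
    intro j
    have := hGlip j x xt
    have h0 : ‖W j‖ ≤ BG * ‖x - xt‖ := this
    calc ‖W j‖ ^ 2 ≤ (BG * ‖x - xt‖) ^ 2 := by
          exact pow_le_pow_left₀ (norm_nonneg _) h0 2
      _ = BG ^ 2 * ‖x - xt‖ ^ 2 := by ring
  have hZle : ∑ j, ‖Z j‖ ^ 2 ≤ (m:ℝ) * (BG ^ 2 * ‖x - xt‖ ^ 2) := by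
    have h2 : ∑ j, ⟪W j, D⟫ = (m:ℝ) * ‖D‖ ^ 2 := by
      rw [← sum_inner, hmD, real_inner_smul_left, real_inner_self_eq_norm_sq]
    have h3 : ∑ j, ‖Z j‖ ^ 2
        = (∑ j, ‖W j‖ ^ 2) - 2 * ((m:ℝ) * ‖D‖ ^ 2) + (m:ℝ) * ‖D‖ ^ 2 := by
      have : ∀ j : Fin m, ‖Z j‖ ^ 2 = ‖W j‖ ^ 2 - 2 * ⟪W j, D⟫ + ‖D‖ ^ 2 := by
        intro j; rw [hZ]; exact norm_sub_sq_real _ _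
      rw [Finset.sum_congr rfl fun j _ => this j]
      rw [Finset.sum_add_distrib, Finset.sum_sub_distrib, ← Finset.mul_sum, h2]
      simp [Finset.sum_const, mul_comm]
    have h4 : (∑ j, ‖W j‖ ^ 2) ≤ (m:ℝ) * (BG ^ 2 * ‖x - xt‖ ^ 2) := by
      calc (∑ j, ‖W j‖ ^ 2) ≤ ∑ _j : Fin m, BG ^ 2 * ‖x - xt‖ ^ 2 :=
            Finset.sum_le_sum fun j _ => hWle j
        _ = (m:ℝ) * (BG ^ 2 * ‖x - xt‖ ^ 2) := by
            simp [Finset.sum_const, mul_comm]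
    nlinarith [sq_nonneg ‖D‖, hmpos]
  -- variance bound for Esig
  have hvar : Esig (fun σ : Fin A → Fin m => ‖GhatSVRG G σ x xt - Gbar G x‖ ^ 2)
      ≤ BG ^ 2 * ‖x - xt‖ ^ 2 / (A:ℝ) := by
    have hsum : ∑ σ : Fin A → Fin m, ‖GhatSVRG G σ x xt - Gbar G x‖ ^ 2
        = ((A:ℝ)⁻¹) ^ 2 * ((A : ℝ) * (m : ℝ) ^ (A - 1) * ∑ j, ‖Z j‖ ^ 2) := by
      rw [← sum_tuple_norm_sq Z hZsum A, Finset.mul_sum]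
      refine Finset.sum_congr rfl fun σ _ => ?_
      rw [hGdiff σ, norm_smul]
      rw [mul_pow]
      congr 1
      rw [Real.norm_eq_abs, sq_abs]
    rw [Esig, hsum]
    have hpow : (m:ℝ) ^ A = (m:ℝ) * (m:ℝ) ^ (A - 1) := by
      conv_lhs => rw [← Nat.succ_pred_eq_of_pos hA]
      rw [pow_succ', Nat.pred_eq_sub_one]
    have hppos : (0:ℝ) < (m:ℝ) ^ (A - 1) := by positivity
    rw [div_le_div_iff₀ (by positivity) hApos]
    rw [hpow]
    have := hZle
    calc ((A:ℝ)⁻¹) ^ 2 * ((A : ℝ) * (m : ℝ) ^ (A - 1) * ∑ j, ‖Z j‖ ^ 2) * (A:ℝ)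
        = (m : ℝ) ^ (A - 1) * ∑ j, ‖Z j‖ ^ 2 := by
          field_simp
      _ ≤ (m : ℝ) ^ (A - 1) * ((m:ℝ) * (BG ^ 2 * ‖x - xt‖ ^ 2)) := by
          exact mul_le_mul_of_nonneg_left hZle (le_of_lt hppos)
      _ = BG ^ 2 * ‖x - xt‖ ^ 2 * ((m:ℝ) * (m:ℝ) ^ (A - 1)) := by ring
  -- operator norm bound on the Jacobian estimator
  have hJop : ∀ σ : Fin A → Fin m, ‖JhatSVRG J σ x xt‖ ≤ 3 * BG := by
    intro σ
    have hJb' : ∀ j y, ‖J j y‖ ≤ BG := fun j y => (opNorm_le_frobNorm _).trans (hJb j y)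
    have h1 : ‖Jbar J xt‖ ≤ BG := by
      rw [Jbar]
      rw [show ‖(m:ℝ)⁻¹ • ∑ j, J j xt‖ = (m:ℝ)⁻¹ * ‖∑ j, J j xt‖ from
        (norm_smul ((m:ℝ)⁻¹) (∑ j, J j xt)).trans
          (by rw [Real.norm_eq_abs, abs_of_pos (inv_pos.mpr hmpos)])]
      calc (m:ℝ)⁻¹ * ‖∑ j, J j xt‖ ≤ (m:ℝ)⁻¹ * ∑ j, ‖J j xt‖ := by
            exact mul_le_mul_of_nonneg_left (norm_sum_le _ _) (le_of_lt (inv_pos.mpr hmpos))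
        _ ≤ (m:ℝ)⁻¹ * ((m:ℝ) * BG) := by
            refine mul_le_mul_of_nonneg_left ?_ (le_of_lt (inv_pos.mpr hmpos))
            calc ∑ j, ‖J j xt‖ ≤ ∑ _j : Fin m, BG := Finset.sum_le_sum fun j _ => hJb' j xt
              _ = (m:ℝ) * BG := by simp [Finset.sum_const, mul_comm]
        _ = BG := by field_simp
    have h2 : ‖(A:ℝ)⁻¹ • ∑ l, (J (σ l) x - J (σ l) xt)‖ ≤ 2 * BG := by
      rw [show ‖(A:ℝ)⁻¹ • ∑ l, (J (σ l) x - J (σ l) xt)‖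
          = (A:ℝ)⁻¹ * ‖∑ l, (J (σ l) x - J (σ l) xt)‖ from
        (norm_smul ((A:ℝ)⁻¹) (∑ l, (J (σ l) x - J (σ l) xt))).trans
          (by rw [Real.norm_eq_abs, abs_of_pos (inv_pos.mpr hApos)])]
      calc (A:ℝ)⁻¹ * ‖∑ l, (J (σ l) x - J (σ l) xt)‖
          ≤ (A:ℝ)⁻¹ * ∑ l, ‖J (σ l) x - J (σ l) xt‖ := by
            exact mul_le_mul_of_nonneg_left (norm_sum_le _ _) (le_of_lt (inv_pos.mpr hApos))
        _ ≤ (A:ℝ)⁻¹ * ((A:ℝ) * (2 * BG)) := by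
            refine mul_le_mul_of_nonneg_left ?_ (le_of_lt (inv_pos.mpr hApos))
            calc ∑ l, ‖J (σ l) x - J (σ l) xt‖ ≤ ∑ _l : Fin A, 2 * BG := by
                  refine Finset.sum_le_sum fun l _ => ?_
                  calc ‖J (σ l) x - J (σ l) xt‖ ≤ ‖J (σ l) x‖ + ‖J (σ l) xt‖ :=
                        norm_sub_le _ _
                    _ ≤ BG + BG := add_le_add (hJb' _ _) (hJb' _ _)
                    _ = 2 * BG := by ring
              _ = (A:ℝ) * (2 * BG) := by simp [Finset.sum_const, mul_comm]
        _ = 2 * BG := by field_simp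
    calc ‖JhatSVRG J σ x xt‖
        ≤ ‖(A:ℝ)⁻¹ • ∑ l, (J (σ l) x - J (σ l) xt)‖ + ‖Jbar J xt‖ := by
          rw [JhatSVRG]; exact norm_add_le _ _
      _ ≤ 2 * BG + BG := add_le_add h2 h1
      _ = 3 * BG := by ring
  -- pointwise bound
  have hpt : ∀ (i : Fin n) (σ : Fin A → Fin m),
      ‖transApp (JhatSVRG J σ x xt) (gradF i (GhatSVRG G σ x xt)) -
        transApp (JhatSVRG J σ x xt) (gradF i (Gbar G x))‖ ^ 2
      ≤ 9 * BG ^ 2 * LF ^ 2 * ‖GhatSVRG G σ x xt - Gbar G x‖ ^ 2 := by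
    intro i σ
    set T := JhatSVRG J σ x xt
    set v := gradF i (GhatSVRG G σ x xt) - gradF i (Gbar G x) with hv
    have hsub : transApp T (gradF i (GhatSVRG G σ x xt)) - transApp T (gradF i (Gbar G x))
        = transApp T v := by
      rw [transApp, transApp, transApp, hv, map_sub]
    rw [hsub]
    have hadj : ‖transApp T v‖ ≤ ‖T‖ * ‖v‖ := by
      rw [transApp]
      calc ‖(ContinuousLinearMap.adjoint T) v‖ ≤ ‖ContinuousLinearMap.adjoint T‖ * ‖v‖ :=
            ContinuousLinearMap.le_opNorm _ _
        _ = ‖T‖ * ‖v‖ := by rw [ContinuousLinearMap.adjoint.norm_map]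
    have hvle : ‖v‖ ≤ LF * ‖GhatSVRG G σ x xt - Gbar G x‖ := hLip i _ _
    have hchain : ‖transApp T v‖ ≤ 3 * BG * (LF * ‖GhatSVRG G σ x xt - Gbar G x‖) := by
      calc ‖transApp T v‖ ≤ ‖T‖ * ‖v‖ := hadj
        _ ≤ (3 * BG) * (LF * ‖GhatSVRG G σ x xt - Gbar G x‖) := by
            exact mul_le_mul (hJop σ) hvle (norm_nonneg _)
              (by positivity)
    calc ‖transApp T v‖ ^ 2 ≤ (3 * BG * (LF * ‖GhatSVRG G σ x xt - Gbar G x‖)) ^ 2 :=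
          pow_le_pow_left₀ (norm_nonneg _) hchain 2
      _ = 9 * BG ^ 2 * LF ^ 2 * ‖GhatSVRG G σ x xt - Gbar G x‖ ^ 2 := by ring
  -- put everything together
  have hEi : ∀ i : Fin n, Esig (fun σ : Fin A → Fin m =>
      ‖transApp (JhatSVRG J σ x xt) (gradF i (GhatSVRG G σ x xt)) -
        transApp (JhatSVRG J σ x xt) (gradF i (Gbar G x))‖ ^ 2)
      ≤ 9 * BG ^ 4 * LF ^ 2 * (1 / (A : ℝ)) * ‖x - xt‖ ^ 2 := by
    intro i
    have step1 : Esig (fun σ : Fin A → Fin m =>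
        ‖transApp (JhatSVRG J σ x xt) (gradF i (GhatSVRG G σ x xt)) -
          transApp (JhatSVRG J σ x xt) (gradF i (Gbar G x))‖ ^ 2)
        ≤ Esig (fun σ : Fin A → Fin m =>
            9 * BG ^ 2 * LF ^ 2 * ‖GhatSVRG G σ x xt - Gbar G x‖ ^ 2) :=
      Esig_mono fun σ => hpt i σ
    have step2 : Esig (fun σ : Fin A → Fin m =>
        9 * BG ^ 2 * LF ^ 2 * ‖GhatSVRG G σ x xt - Gbar G x‖ ^ 2)
        = 9 * BG ^ 2 * LF ^ 2 *
            Esig (fun σ : Fin A → Fin m => ‖GhatSVRG G σ x xt - Gbar G x‖ ^ 2) := by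
      rw [Esig, Esig, ← Finset.mul_sum, mul_div_assoc]
    calc _ ≤ Esig (fun σ : Fin A → Fin m =>
            9 * BG ^ 2 * LF ^ 2 * ‖GhatSVRG G σ x xt - Gbar G x‖ ^ 2) := step1
      _ = 9 * BG ^ 2 * LF ^ 2 *
            Esig (fun σ : Fin A → Fin m => ‖GhatSVRG G σ x xt - Gbar G x‖ ^ 2) := step2
      _ ≤ 9 * BG ^ 2 * LF ^ 2 * (BG ^ 2 * ‖x - xt‖ ^ 2 / (A:ℝ)) := by
          exact mul_le_mul_of_nonneg_left hvar (by positivity)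
      _ = 9 * BG ^ 4 * LF ^ 2 * (1 / (A : ℝ)) * ‖x - xt‖ ^ 2 := by
          field_simp
  have hnpos : (0:ℝ) < (n:ℝ) := by exact_mod_cast hn
  calc (n : ℝ)⁻¹ * ∑ i, Esig (fun σ : Fin A → Fin m =>
        ‖transApp (JhatSVRG J σ x xt) (gradF i (GhatSVRG G σ x xt)) -
          transApp (JhatSVRG J σ x xt) (gradF i (Gbar G x))‖ ^ 2)
      ≤ (n : ℝ)⁻¹ * ∑ _i : Fin n, (9 * BG ^ 4 * LF ^ 2 * (1 / (A : ℝ)) * ‖x - xt‖ ^ 2) := by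
        refine mul_le_mul_of_nonneg_left ?_ (le_of_lt (inv_pos.mpr hnpos))
        exact Finset.sum_le_sum fun i _ => hEi i
    _ = 9 * BG ^ 4 * LF ^ 2 * (1 / (A : ℝ)) * ‖x - xt‖ ^ 2 := by
        rw [Finset.sum_const, card_univ, Fintype.card_fin, nsmul_eq_mul]
        field_simp
end
end

section
/- Deviation of the SVRG estimated gradient from the true partial gradient: Suppose Assumption 2 holds. Then for all x, x̃ ∈ ℝ^N and every integer A ≥ 1, E_{σ,i}[ ‖(∂Ĝ(σ,x,x̃))^T ∇F_i(Ĝ(σ,x,x̃)) − (∂G(x))^T ∇F_i(G(x))‖² ] ≤ 2(B_F² L_G² + B_G⁴ L_F²) · (1/A) · ‖x − x̃‖². -/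
noncomputable section

open Finset
open scoped RealInnerProductSpace

/-! ### Auxiliary lemmas -/

lemma key_sum {E : Type*} [NormedAddCommGroup E] [InnerProductSpace ℝ E] (m : ℕ)
    (W : Fin m → E) (hW : ∑ k, W k = 0) (A : ℕ) :
    ∑ σ : Fin A → Fin m, ‖∑ l, W (σ l)‖ ^ 2
      = (A : ℝ) * (m : ℝ) ^ (A - 1) * ∑ k, ‖W k‖ ^ 2 := by
  induction A with
  | zero => simp
  | succ A ih =>
    rw [← (Fin.consEquiv (fun _ => Fin m)).sum_comp, Fintype.sum_prod_type]
    have hcons : ∀ (a : Fin m) (τ : Fin A → Fin m),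
        ∑ l : Fin (A + 1), W ((Fin.consEquiv (fun _ => Fin m)) (a, τ) l)
          = W a + ∑ l : Fin A, W (τ l) := by
      intro a τ
      rw [Fin.sum_univ_succ]
      simp [Fin.consEquiv]
    simp_rw [hcons, norm_add_sq_real]
    rw [show (∑ a : Fin m, ∑ τ : Fin A → Fin m,
        (‖W a‖ ^ 2 + 2 * ⟪W a, ∑ l, W (τ l)⟫ + ‖∑ l, W (τ l)‖ ^ 2)) =
        (∑ a : Fin m, ∑ τ : Fin A → Fin m, ‖W a‖ ^ 2)
        + (∑ a : Fin m, ∑ τ : Fin A → Fin m, 2 * ⟪W a, ∑ l, W (τ l)⟫)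
        + (∑ a : Fin m, ∑ τ : Fin A → Fin m, ‖∑ l, W (τ l)‖ ^ 2) by
      simp [Finset.sum_add_distrib]]
    have h1 : (∑ a : Fin m, ∑ τ : Fin A → Fin m, ‖W a‖ ^ 2)
        = (m : ℝ) ^ A * ∑ a : Fin m, ‖W a‖ ^ 2 := by
      simp [Finset.sum_const, Finset.mul_sum, mul_comm]
    have h2 : (∑ a : Fin m, ∑ τ : Fin A → Fin m, 2 * ⟪W a, ∑ l, W (τ l)⟫) = 0 := by
      have : ∀ a : Fin m, ∑ τ : Fin A → Fin m, 2 * ⟪W a, ∑ l, W (τ l)⟫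
          = 2 * ⟪W a, ∑ τ : Fin A → Fin m, ∑ l, W (τ l)⟫ := by
        intro a; rw [← Finset.mul_sum, ← inner_sum]
      simp_rw [this, ← Finset.mul_sum, ← sum_inner, hW]
      simp
    have h3 : (∑ a : Fin m, ∑ τ : Fin A → Fin m, ‖∑ l, W (τ l)‖ ^ 2)
        = (m : ℝ) * ((A : ℝ) * (m : ℝ) ^ (A - 1) * ∑ k, ‖W k‖ ^ 2) := by
      rw [Finset.sum_const, ih, Finset.card_univ, Fintype.card_fin, nsmul_eq_mul]
    rw [h1, h2, h3]
    have hAm : (m : ℝ) * ((A : ℝ) * (m : ℝ) ^ (A - 1)) = (A : ℝ) * (m : ℝ) ^ A := by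
      cases A with
      | zero => simp
      | succ A' => rw [Nat.succ_sub_one, pow_succ]; ring
    push_cast
    linear_combination (∑ a : Fin m, ‖W a‖ ^ 2) * hAm

lemma var_ineq {E : Type*} [NormedAddCommGroup E] [InnerProductSpace ℝ E] {m : ℕ}
    (hm : 0 < m) (V : Fin m → E) :
    ∑ k, ‖V k - (m : ℝ)⁻¹ • ∑ j, V j‖ ^ 2 ≤ ∑ k, ‖V k‖ ^ 2 := by
  have hmne : (m : ℝ) ≠ 0 := Nat.cast_ne_zero.2 hm.ne'
  set c : E := (m : ℝ)⁻¹ • ∑ j, V j with hc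
  have hsum : ∑ j, V j = (m : ℝ) • c := by
    rw [hc, smul_smul, mul_inv_cancel₀ hmne, one_smul]
  have hexp : ∑ k, ‖V k - c‖ ^ 2 = ∑ k, ‖V k‖ ^ 2 - (m : ℝ) * ‖c‖ ^ 2 := by
    simp_rw [norm_sub_sq_real]
    rw [Finset.sum_add_distrib, Finset.sum_sub_distrib]
    have hin : ∑ k : Fin m, (2:ℝ) * ⟪V k, c⟫ = 2 * ((m : ℝ) * ‖c‖ ^ 2) := by
      rw [← Finset.mul_sum, ← sum_inner, hsum, real_inner_smul_left,
        real_inner_self_eq_norm_sq]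
    have hcc : ∑ _x : Fin m, ‖c‖ ^ 2 = (m : ℝ) * ‖c‖ ^ 2 := by
      rw [Finset.sum_const, Finset.card_univ, Fintype.card_fin, nsmul_eq_mul]
    rw [hin, hcc]
    ring
  rw [hexp]
  have hmpos : (0:ℝ) ≤ (m : ℝ) := Nat.cast_nonneg m
  nlinarith [sq_nonneg ‖c‖]

lemma frobNorm_nonneg {N M : ℕ} (T : Euc N →L[ℝ] Euc M) : 0 ≤ frobNorm T :=
  Real.sqrt_nonneg _

lemma frobNorm_sq {N M : ℕ} (T : Euc N →L[ℝ] Euc M) :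
    frobNorm T ^ 2 = ∑ j : Fin N, ‖T (EuclideanSpace.single j 1)‖ ^ 2 :=
  Real.sq_sqrt (Finset.sum_nonneg fun _ _ => sq_nonneg _)

lemma euc_decomp {N : ℕ} (u : Euc N) :
    u = ∑ j : Fin N, u j • EuclideanSpace.single j 1 := by
  have h := (EuclideanSpace.basisFun (Fin N) ℝ).sum_repr u
  simp only [EuclideanSpace.basisFun_apply, EuclideanSpace.basisFun_repr] at h
  exact h.symm

lemma svrg_var {E : Type*} [NormedAddCommGroup E] [InnerProductSpace ℝ E]
    {m A : ℕ} (hm : 0 < m) (hA : 0 < A) (v : Fin m → E) :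
    ∑ σ : Fin A → Fin m, ‖(A : ℝ)⁻¹ • ∑ l, (v (σ l) - (m : ℝ)⁻¹ • ∑ j, v j)‖ ^ 2
      = (m : ℝ) ^ (A - 1) * ((A : ℝ)⁻¹ * ∑ k, ‖v k - (m : ℝ)⁻¹ • ∑ j, v j‖ ^ 2) := by
  have hAne : (A : ℝ) ≠ 0 := Nat.cast_ne_zero.2 hA.ne'
  have hmne : (m : ℝ) ≠ 0 := Nat.cast_ne_zero.2 hm.ne'
  have hW : ∑ k, (v k - (m : ℝ)⁻¹ • ∑ j, v j) = 0 := by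
    rw [Finset.sum_sub_distrib, Finset.sum_const, Finset.card_univ, Fintype.card_fin,
      ← Nat.cast_smul_eq_nsmul ℝ, smul_smul, mul_inv_cancel₀ hmne, one_smul, sub_self]
  have hk := key_sum m (fun k => v k - (m : ℝ)⁻¹ • ∑ j, v j) hW A
  have hns : ∀ σ : Fin A → Fin m,
      ‖(A : ℝ)⁻¹ • ∑ l, (v (σ l) - (m : ℝ)⁻¹ • ∑ j, v j)‖ ^ 2
        = (A : ℝ)⁻¹ ^ 2 * ‖∑ l, (v (σ l) - (m : ℝ)⁻¹ • ∑ j, v j)‖ ^ 2 := by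
    intro σ
    rw [norm_smul, mul_pow, Real.norm_eq_abs, sq_abs]
  simp_rw [hns]
  rw [← Finset.mul_sum, hk]
  field_simp

lemma hat_identity {E : Type*} [AddCommGroup E] [Module ℝ E] {m A : ℕ}
    (hAne : (A : ℝ) ≠ 0) (u w : Fin m → E) (σ : Fin A → Fin m) :
    ((A : ℝ)⁻¹ • ∑ l, (u (σ l) - w (σ l)) + (m : ℝ)⁻¹ • ∑ j, w j)
        - (m : ℝ)⁻¹ • ∑ j, u j
      = (A : ℝ)⁻¹ • ∑ l, ((u (σ l) - w (σ l)) - (m : ℝ)⁻¹ • ∑ j, (u j - w j)) := by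
  rw [Finset.sum_sub_distrib (s := Finset.univ)
      (f := fun l => u (σ l) - w (σ l))
      (g := fun _ => (m : ℝ)⁻¹ • ∑ j, (u j - w j)),
    Finset.sum_const, Finset.card_univ, Fintype.card_fin,
    ← Nat.cast_smul_eq_nsmul ℝ, smul_sub, smul_smul, inv_mul_cancel₀ hAne, one_smul,
    show (∑ j, (u j - w j)) = (∑ j, u j) - (∑ j, w j) from Finset.sum_sub_distrib _ _,
    smul_sub]
  abel

set_option maxHeartbeats 1000000 in
lemma point_bound {N M : ℕ} (S T : Euc N →L[ℝ] Euc M) (vh v : Euc M)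
    (BF BG LF c : ℝ) (hBF : 0 ≤ BF) (hBG : 0 ≤ BG) (hLF : 0 ≤ LF) (hc : 0 ≤ c)
    (hvh : ‖vh‖ ≤ BF) (hd : ‖vh - v‖ ≤ LF * c) (hT : ‖T‖ ≤ BG) :
    ‖transApp S vh - transApp T v‖ ^ 2
      ≤ 2 * BF ^ 2 * frobNorm (S - T) ^ 2 + 2 * (BG ^ 2 * LF ^ 2) * c ^ 2 := by
  have hdec : transApp S vh - transApp T v
      = (ContinuousLinearMap.adjoint (S - T)) vh
        + (ContinuousLinearMap.adjoint T) (vh - v) := by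
    rw [transApp, transApp, map_sub, ContinuousLinearMap.sub_apply, map_sub]
    abel
  rw [hdec]
  set a := (ContinuousLinearMap.adjoint (S - T)) vh with ha
  set b := (ContinuousLinearMap.adjoint T) (vh - v) with hb
  have haB : ‖a‖ ≤ frobNorm (S - T) * BF := by
    calc ‖a‖ ≤ ‖ContinuousLinearMap.adjoint (S - T)‖ * ‖vh‖ :=
          ContinuousLinearMap.le_opNorm _ _
      _ = ‖S - T‖ * ‖vh‖ := by rw [LinearIsometryEquiv.norm_map]
      _ ≤ frobNorm (S - T) * BF :=
          mul_le_mul (opNorm_le_frobNorm _) hvh (norm_nonneg _) (frobNorm_nonneg _)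
  have hbB : ‖b‖ ≤ BG * (LF * c) := by
    calc ‖b‖ ≤ ‖ContinuousLinearMap.adjoint T‖ * ‖vh - v‖ :=
          ContinuousLinearMap.le_opNorm _ _
      _ = ‖T‖ * ‖vh - v‖ := by rw [LinearIsometryEquiv.norm_map]
      _ ≤ BG * (LF * c) := mul_le_mul hT hd (norm_nonneg _) hBG
  have h2 : ‖a + b‖ ^ 2 ≤ 2 * ‖a‖ ^ 2 + 2 * ‖b‖ ^ 2 := by
    nlinarith [norm_add_le a b, norm_nonneg a, norm_nonneg b, norm_nonneg (a + b),
      sq_nonneg (‖a‖ - ‖b‖)]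
  have ha2 : ‖a‖ ^ 2 ≤ (frobNorm (S - T) * BF) ^ 2 :=
    pow_le_pow_left₀ (norm_nonneg a) haB 2
  have hb2 : ‖b‖ ^ 2 ≤ (BG * (LF * c)) ^ 2 :=
    pow_le_pow_left₀ (norm_nonneg b) hbB 2
  nlinarith [h2, ha2, hb2]

/-- Deviation of the SVRG estimated gradient from the true partial gradient. -/
theorem svrg_gradient_deviation_bound
    {n m N M A : ℕ} (hn : 0 < n) (hm : 0 < m) (hA : 0 < A)
    (BF LF BG LG : ℝ) (hBF : 0 < BF) (hLF : 0 < LF) (hBG : 0 < BG) (hLG : 0 < LG)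
    (Fi : Fin n → Euc M → ℝ) (G : Fin m → Euc N → Euc M)
    (J : Fin m → Euc N → (Euc N →L[ℝ] Euc M)) (gradF : Fin n → Euc M → Euc M)
    (hsm : SmoothData Fi G J gradF)
    (hA2 : Assumption2 G J gradF BF LF BG LG)
    (x xt : Euc N) :
    (n : ℝ)⁻¹ * ∑ i, Esig (fun σ : Fin A → Fin m =>
        ‖transApp (JhatSVRG J σ x xt) (gradF i (GhatSVRG G σ x xt)) -
          transApp (Jbar J x) (gradF i (Gbar G x))‖ ^ 2)
      ≤ 2 * (BF ^ 2 * LG ^ 2 + BG ^ 4 * LF ^ 2) * (1 / (A : ℝ)) * ‖x - xt‖ ^ 2 := by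
  obtain ⟨hgB, hgL, hJB, hGL, hJL⟩ := hA2
  have hAne : (A : ℝ) ≠ 0 := Nat.cast_ne_zero.2 hA.ne'
  have hmne : (m : ℝ) ≠ 0 := Nat.cast_ne_zero.2 hm.ne'
  have hAinn : (0:ℝ) ≤ (A : ℝ)⁻¹ := inv_nonneg.2 (Nat.cast_nonneg A)
  have hDnn : (0:ℝ) ≤ ‖x - xt‖ := norm_nonneg (x - xt)
  -- identity for the inner-function estimator
  have hGhat : ∀ σ : Fin A → Fin m, GhatSVRG G σ x xt - Gbar G x
      = (A : ℝ)⁻¹ • ∑ l, ((G (σ l) x - G (σ l) xt)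
          - (m : ℝ)⁻¹ • ∑ j, (G j x - G j xt)) := by
    intro σ
    rw [GhatSVRG, Gbar, Gbar]
    exact hat_identity hAne (fun j => G j x) (fun j => G j xt) σ
  -- identity for the Jacobian estimator
  have hJhat : ∀ σ : Fin A → Fin m, JhatSVRG J σ x xt - Jbar J x
      = (A : ℝ)⁻¹ • ∑ l, ((J (σ l) x - J (σ l) xt)
          - (m : ℝ)⁻¹ • ∑ j, (J j x - J j xt)) := by
    intro σ
    rw [JhatSVRG, Jbar, Jbar]
    exact hat_identity hAne (fun j => J j x) (fun j => J j xt) σ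
  -- variance bound for the inner-function estimator
  have hGtot : ∑ σ : Fin A → Fin m, ‖GhatSVRG G σ x xt - Gbar G x‖ ^ 2
      ≤ (m : ℝ) ^ A * ((A : ℝ)⁻¹ * (BG ^ 2 * ‖x - xt‖ ^ 2)) := by
    have h1 : ∑ σ : Fin A → Fin m, ‖GhatSVRG G σ x xt - Gbar G x‖ ^ 2
        = (m : ℝ) ^ (A - 1) * ((A : ℝ)⁻¹
            * ∑ k, ‖(G k x - G k xt) - (m : ℝ)⁻¹ • ∑ j, (G j x - G j xt)‖ ^ 2) := by
      simp_rw [hGhat]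
      exact svrg_var hm hA (fun j => G j x - G j xt)
    rw [h1]
    have h2 : ∑ k, ‖(G k x - G k xt) - (m : ℝ)⁻¹ • ∑ j, (G j x - G j xt)‖ ^ 2
        ≤ (m : ℝ) * (BG ^ 2 * ‖x - xt‖ ^ 2) := by
      refine (var_ineq hm (fun j => G j x - G j xt)).trans ?_
      have h3 : ∀ k : Fin m, ‖G k x - G k xt‖ ^ 2 ≤ BG ^ 2 * ‖x - xt‖ ^ 2 := by
        intro k
        have := hGL k x xt
        nlinarith [norm_nonneg (G k x - G k xt)]
      calc ∑ k : Fin m, ‖G k x - G k xt‖ ^ 2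
          ≤ ∑ _k : Fin m, BG ^ 2 * ‖x - xt‖ ^ 2 := Finset.sum_le_sum fun k _ => h3 k
        _ = (m : ℝ) * (BG ^ 2 * ‖x - xt‖ ^ 2) := by
            rw [Finset.sum_const, Finset.card_univ, Fintype.card_fin, nsmul_eq_mul]
    have hpw : (m : ℝ) ^ (A - 1) * (m : ℝ) = (m : ℝ) ^ A := by
      rw [← pow_succ, Nat.sub_add_cancel hA]
    calc (m : ℝ) ^ (A - 1) * ((A : ℝ)⁻¹
            * ∑ k, ‖(G k x - G k xt) - (m : ℝ)⁻¹ • ∑ j, (G j x - G j xt)‖ ^ 2)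
        ≤ (m : ℝ) ^ (A - 1) * ((A : ℝ)⁻¹ * ((m : ℝ) * (BG ^ 2 * ‖x - xt‖ ^ 2))) := by
          have hmp : (0:ℝ) ≤ (m : ℝ) ^ (A - 1) := by positivity
          exact mul_le_mul_of_nonneg_left (mul_le_mul_of_nonneg_left h2 hAinn) hmp
      _ = (m : ℝ) ^ A * ((A : ℝ)⁻¹ * (BG ^ 2 * ‖x - xt‖ ^ 2)) := by
          rw [← hpw]; ring
  -- variance bound for the Jacobian estimator (Frobenius norm, column by column)
  have hJtot : ∑ σ : Fin A → Fin m, frobNorm (JhatSVRG J σ x xt - Jbar J x) ^ 2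
      ≤ (m : ℝ) ^ A * ((A : ℝ)⁻¹ * (LG ^ 2 * ‖x - xt‖ ^ 2)) := by
    have hcol : ∀ (σ : Fin A → Fin m) (j0 : Fin N),
        (JhatSVRG J σ x xt - Jbar J x) (EuclideanSpace.single j0 1)
          = (A : ℝ)⁻¹ • ∑ l, ((J (σ l) x - J (σ l) xt) (EuclideanSpace.single j0 1)
              - (m : ℝ)⁻¹ • ∑ j, (J j x - J j xt) (EuclideanSpace.single j0 1)) := by
      intro σ j0
      rw [hJhat σ]
      simp [ContinuousLinearMap.sum_apply, ContinuousLinearMap.sub_apply, smul_sub,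
        Finset.sum_sub_distrib]
    have h1 : ∑ σ : Fin A → Fin m, frobNorm (JhatSVRG J σ x xt - Jbar J x) ^ 2
        = ∑ j0 : Fin N, ∑ σ : Fin A → Fin m,
            ‖(A : ℝ)⁻¹ • ∑ l, ((J (σ l) x - J (σ l) xt) (EuclideanSpace.single j0 1)
              - (m : ℝ)⁻¹ • ∑ j, (J j x - J j xt) (EuclideanSpace.single j0 1))‖ ^ 2 := by
      rw [← Finset.sum_comm]
      refine Finset.sum_congr rfl fun σ _ => ?_
      rw [frobNorm_sq]
      exact Finset.sum_congr rfl fun j0 _ => by rw [hcol σ j0]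
    rw [h1]
    have h2 : ∀ j0 : Fin N, ∑ σ : Fin A → Fin m,
        ‖(A : ℝ)⁻¹ • ∑ l, ((J (σ l) x - J (σ l) xt) (EuclideanSpace.single j0 1)
          - (m : ℝ)⁻¹ • ∑ j, (J j x - J j xt) (EuclideanSpace.single j0 1))‖ ^ 2
        = (m : ℝ) ^ (A - 1) * ((A : ℝ)⁻¹ * ∑ k,
            ‖(J k x - J k xt) (EuclideanSpace.single j0 1)
              - (m : ℝ)⁻¹ • ∑ j, (J j x - J j xt) (EuclideanSpace.single j0 1)‖ ^ 2) :=
      fun j0 => svrg_var hm hA (fun k => (J k x - J k xt) (EuclideanSpace.single j0 1))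
    rw [Finset.sum_congr rfl fun j0 _ => h2 j0]
    rw [← Finset.mul_sum, ← Finset.mul_sum]
    have h3 : ∑ j0 : Fin N, ∑ k : Fin m,
        ‖(J k x - J k xt) (EuclideanSpace.single j0 1)
          - (m : ℝ)⁻¹ • ∑ j, (J j x - J j xt) (EuclideanSpace.single j0 1)‖ ^ 2
        ≤ (m : ℝ) * (LG ^ 2 * ‖x - xt‖ ^ 2) := by
      have h4 : ∀ j0 : Fin N, ∑ k : Fin m,
          ‖(J k x - J k xt) (EuclideanSpace.single j0 1)
            - (m : ℝ)⁻¹ • ∑ j, (J j x - J j xt) (EuclideanSpace.single j0 1)‖ ^ 2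
          ≤ ∑ k : Fin m, ‖(J k x - J k xt) (EuclideanSpace.single j0 1)‖ ^ 2 :=
        fun j0 => var_ineq hm (fun k => (J k x - J k xt) (EuclideanSpace.single j0 1))
      refine (Finset.sum_le_sum fun j0 _ => h4 j0).trans ?_
      rw [Finset.sum_comm]
      have h5 : ∀ k : Fin m,
          ∑ j0 : Fin N, ‖(J k x - J k xt) (EuclideanSpace.single j0 1)‖ ^ 2
            ≤ LG ^ 2 * ‖x - xt‖ ^ 2 := by
        intro k
        rw [← frobNorm_sq]
        have := hJL k x xt
        nlinarith [frobNorm_nonneg (J k x - J k xt)]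
      calc ∑ k : Fin m, ∑ j0 : Fin N,
            ‖(J k x - J k xt) (EuclideanSpace.single j0 1)‖ ^ 2
          ≤ ∑ _k : Fin m, LG ^ 2 * ‖x - xt‖ ^ 2 := Finset.sum_le_sum fun k _ => h5 k
        _ = (m : ℝ) * (LG ^ 2 * ‖x - xt‖ ^ 2) := by
            rw [Finset.sum_const, Finset.card_univ, Fintype.card_fin, nsmul_eq_mul]
    have hpw : (m : ℝ) ^ (A - 1) * (m : ℝ) = (m : ℝ) ^ A := by
      rw [← pow_succ, Nat.sub_add_cancel hA]
    calc (m : ℝ) ^ (A - 1) * ((A : ℝ)⁻¹ * ∑ j0 : Fin N, ∑ k : Fin m,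
            ‖(J k x - J k xt) (EuclideanSpace.single j0 1)
              - (m : ℝ)⁻¹ • ∑ j, (J j x - J j xt) (EuclideanSpace.single j0 1)‖ ^ 2)
        ≤ (m : ℝ) ^ (A - 1) * ((A : ℝ)⁻¹ * ((m : ℝ) * (LG ^ 2 * ‖x - xt‖ ^ 2))) := by
          have hmp : (0:ℝ) ≤ (m : ℝ) ^ (A - 1) := by positivity
          exact mul_le_mul_of_nonneg_left (mul_le_mul_of_nonneg_left h3 hAinn) hmp
      _ = (m : ℝ) ^ A * ((A : ℝ)⁻¹ * (LG ^ 2 * ‖x - xt‖ ^ 2)) := by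
          rw [← hpw]; ring
  -- norm of the average Jacobian
  have hJbarN : ‖Jbar J x‖ ≤ BG := by
    rw [Jbar]
    calc ‖(m : ℝ)⁻¹ • ∑ j, J j x‖ ≤ (m : ℝ)⁻¹ * ‖∑ j, J j x‖ := by
          have h := ContinuousLinearMap.opNorm_smul_le ((m : ℝ)⁻¹) (∑ j, J j x)
          rwa [Real.norm_eq_abs, abs_of_nonneg (inv_nonneg.2 (Nat.cast_nonneg m))] at h
      _ ≤ (m : ℝ)⁻¹ * ∑ j, ‖J j x‖ := by
          exact mul_le_mul_of_nonneg_left (norm_sum_le _ _)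
            (inv_nonneg.2 (Nat.cast_nonneg m))
      _ ≤ (m : ℝ)⁻¹ * ∑ _j : Fin m, BG := by
          refine mul_le_mul_of_nonneg_left ?_ (inv_nonneg.2 (Nat.cast_nonneg m))
          exact Finset.sum_le_sum fun j _ => (opNorm_le_frobNorm (J j x)).trans (hJB j x)
      _ = BG := by
          rw [Finset.sum_const, Finset.card_univ, Fintype.card_fin, nsmul_eq_mul,
            ← mul_assoc, inv_mul_cancel₀ hmne, one_mul]
  -- pointwise bound
  have hpoint : ∀ (σ : Fin A → Fin m) (i : Fin n),
      ‖transApp (JhatSVRG J σ x xt) (gradF i (GhatSVRG G σ x xt)) -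
          transApp (Jbar J x) (gradF i (Gbar G x))‖ ^ 2
        ≤ 2 * BF ^ 2 * frobNorm (JhatSVRG J σ x xt - Jbar J x) ^ 2
          + 2 * (BG ^ 2 * LF ^ 2) * ‖GhatSVRG G σ x xt - Gbar G x‖ ^ 2 := by
    intro σ i
    exact point_bound (JhatSVRG J σ x xt) (Jbar J x)
      (gradF i (GhatSVRG G σ x xt)) (gradF i (Gbar G x)) BF BG LF
      ‖GhatSVRG G σ x xt - Gbar G x‖ hBF.le hBG.le hLF.le (norm_nonneg _)
      (hgB i _) (hgL i _ _) hJbarN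
  -- put everything together
  have hRnn : (0:ℝ) ≤ 2 * (BF ^ 2 * LG ^ 2 + BG ^ 4 * LF ^ 2) * (1 / (A : ℝ))
      * ‖x - xt‖ ^ 2 := by positivity
  have hEsig : ∀ i : Fin n, Esig (fun σ : Fin A → Fin m =>
      ‖transApp (JhatSVRG J σ x xt) (gradF i (GhatSVRG G σ x xt)) -
        transApp (Jbar J x) (gradF i (Gbar G x))‖ ^ 2)
      ≤ 2 * (BF ^ 2 * LG ^ 2 + BG ^ 4 * LF ^ 2) * (1 / (A : ℝ)) * ‖x - xt‖ ^ 2 := by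
    intro i
    rw [Esig]
    have hpow : (0:ℝ) < (m ^ A : ℝ) := by positivity
    rw [div_le_iff₀ hpow]
    have hsum : ∑ σ : Fin A → Fin m,
        ‖transApp (JhatSVRG J σ x xt) (gradF i (GhatSVRG G σ x xt)) -
          transApp (Jbar J x) (gradF i (Gbar G x))‖ ^ 2
        ≤ ∑ σ : Fin A → Fin m,
          (2 * BF ^ 2 * frobNorm (JhatSVRG J σ x xt - Jbar J x) ^ 2
            + 2 * (BG ^ 2 * LF ^ 2) * ‖GhatSVRG G σ x xt - Gbar G x‖ ^ 2) :=
      Finset.sum_le_sum fun σ _ => hpoint σ i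
    refine hsum.trans ?_
    rw [Finset.sum_add_distrib, ← Finset.mul_sum, ← Finset.mul_sum]
    have hc1 : 2 * BF ^ 2 * ∑ σ : Fin A → Fin m,
        frobNorm (JhatSVRG J σ x xt - Jbar J x) ^ 2
        ≤ 2 * BF ^ 2 * ((m : ℝ) ^ A * ((A : ℝ)⁻¹ * (LG ^ 2 * ‖x - xt‖ ^ 2))) := by
      refine mul_le_mul_of_nonneg_left hJtot ?_
      positivity
    have hc2 : 2 * (BG ^ 2 * LF ^ 2) * ∑ σ : Fin A → Fin m,
        ‖GhatSVRG G σ x xt - Gbar G x‖ ^ 2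
        ≤ 2 * (BG ^ 2 * LF ^ 2) * ((m : ℝ) ^ A * ((A : ℝ)⁻¹ * (BG ^ 2 * ‖x - xt‖ ^ 2))) := by
      refine mul_le_mul_of_nonneg_left hGtot ?_
      positivity
    have heq : 2 * BF ^ 2 * ((m : ℝ) ^ A * ((A : ℝ)⁻¹ * (LG ^ 2 * ‖x - xt‖ ^ 2)))
        + 2 * (BG ^ 2 * LF ^ 2) * ((m : ℝ) ^ A * ((A : ℝ)⁻¹ * (BG ^ 2 * ‖x - xt‖ ^ 2)))
        = 2 * (BF ^ 2 * LG ^ 2 + BG ^ 4 * LF ^ 2) * (1 / (A : ℝ)) * ‖x - xt‖ ^ 2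
            * (m ^ A : ℝ) := by
      push_cast
      ring
    linarith [hc1, hc2]
  calc (n : ℝ)⁻¹ * ∑ i, Esig (fun σ : Fin A → Fin m =>
        ‖transApp (JhatSVRG J σ x xt) (gradF i (GhatSVRG G σ x xt)) -
          transApp (Jbar J x) (gradF i (Gbar G x))‖ ^ 2)
      ≤ (n : ℝ)⁻¹ * ∑ _i : Fin n,
          (2 * (BF ^ 2 * LG ^ 2 + BG ^ 4 * LF ^ 2) * (1 / (A : ℝ)) * ‖x - xt‖ ^ 2) := by
        refine mul_le_mul_of_nonneg_left ?_ (inv_nonneg.2 (Nat.cast_nonneg n))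
        exact Finset.sum_le_sum fun i _ => hEsig i
    _ = 2 * (BF ^ 2 * LG ^ 2 + BG ^ 4 * LF ^ 2) * (1 / (A : ℝ)) * ‖x - xt‖ ^ 2 := by
        rw [Finset.sum_const, Finset.card_univ, Fintype.card_fin, nsmul_eq_mul,
          ← mul_assoc, inv_mul_cancel₀ (Nat.cast_ne_zero.2 hn.ne'), one_mul]
end
end

section
/- Variance of the SVRG estimator of the partial gradient of G: Suppose each Jacobian ∂G_j is L_G-Lipschitz in Frobenius norm, i.e. ‖∂G_j(x) − ∂G_j(x′)‖_F ≤ L_G‖x − x′‖ for all x, x′ ∈ ℝ^N and all j. Then for all x, x̃ ∈ ℝ^N and every integer A ≥ 1, E_σ[ ‖∂Ĝ(σ,x,x̃) − ∂G(x)‖_F² ] ≤ L_G² · (1/A) · ‖x − x̃‖². -/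
noncomputable section

open Finset
open scoped RealInnerProductSpace

def colMap (N M : ℕ) : (Euc N →L[ℝ] Euc M) →ₗ[ℝ] PiLp 2 (fun _ : Fin N => Euc M) where
  toFun T := WithLp.toLp 2 (fun j => T (EuclideanSpace.single j 1))
  map_add' S T := by ext j; simp
  map_smul' c T := by ext j; simp

lemma frob_eq {N M : ℕ} (T : Euc N →L[ℝ] Euc M) : frobNorm T = ‖colMap N M T‖ := by
  rw [frobNorm, PiLp.norm_eq_of_L2]; rfl

lemma sum_sq_tuple {V : Type*} [NormedAddCommGroup V] [InnerProductSpace ℝ V]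
    {m : ℕ} (v : Fin m → V) (hv : ∑ j, v j = 0) (A : ℕ) :
    (∑ σ : Fin A → Fin m, ‖∑ l, v (σ l)‖ ^ 2) * m
      = A * m ^ A * ∑ j, ‖v j‖ ^ 2 := by
  induction A with
  | zero => simp
  | succ A ih =>
    set S : (Fin A → Fin m) → V := fun σ => ∑ l, v (σ l) with hS
    have step : (∑ σ : Fin (A + 1) → Fin m, ‖∑ l, v (σ l)‖ ^ 2)
        = ∑ p : Fin m × (Fin A → Fin m),
            (‖v p.1‖ ^ 2 + 2 * ⟪v p.1, S p.2⟫ + ‖S p.2‖ ^ 2) := by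
      rw [← (Fin.consEquiv (fun _ : Fin (A + 1) => Fin m)).sum_comp
            (fun σ => ‖∑ l, v (σ l)‖ ^ 2)]
      refine Fintype.sum_congr _ _ fun p => ?_
      rw [← norm_add_sq_real]
      congr 1
      simp [Fin.sum_univ_succ, Fin.consEquiv, S]
    have h1 : ∑ p : Fin m × (Fin A → Fin m), ‖v p.1‖ ^ 2
        = (m : ℝ) ^ A * ∑ j, ‖v j‖ ^ 2 := by
      rw [Fintype.sum_prod_type]
      simp [Finset.sum_const, Finset.mul_sum, mul_comm]
    have h2 : ∑ p : Fin m × (Fin A → Fin m), 2 * ⟪v p.1, S p.2⟫ = 0 := by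
      rw [Fintype.sum_prod_type_right]
      refine Finset.sum_eq_zero fun σ _ => ?_
      have h0 : ∑ i : Fin m, ⟪v i, S σ⟫ = 0 := by
        rw [← sum_inner, hv, inner_zero_left]
      simpa [← Finset.mul_sum] using h0
    have h3 : ∑ p : Fin m × (Fin A → Fin m), ‖S p.2‖ ^ 2
        = (m : ℝ) * ∑ σ, ‖S σ‖ ^ 2 := by
      rw [Fintype.sum_prod_type_right]
      simp [Finset.sum_const, Finset.mul_sum]
    rw [step, Finset.sum_add_distrib, Finset.sum_add_distrib, h1, h2, h3]
    push_cast
    linear_combination (m : ℝ) * ih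

lemma smul_sum_sub_const {V : Type*} [AddCommGroup V] [Module ℝ V] {A : ℕ}
    (hA : 0 < A) (u : Fin A → V) (c : V) :
    (A : ℝ)⁻¹ • ∑ l, (u l - c) = (A : ℝ)⁻¹ • (∑ l, u l) - c := by
  have hA' : (A : ℝ) ≠ 0 := Nat.cast_ne_zero.mpr hA.ne'
  rw [Finset.sum_sub_distrib, Finset.sum_const, card_univ, Fintype.card_fin, smul_sub,
    ← Nat.cast_smul_eq_nsmul ℝ, smul_smul, inv_mul_cancel₀ hA', one_smul]

lemma mean_var_bound {V : Type*} [NormedAddCommGroup V] [InnerProductSpace ℝ V]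
    {m A : ℕ} (hm : 0 < m) (hA : 0 < A) (w : Fin m → V) (C : ℝ)
    (hw : ∀ j, ‖w j‖ ≤ C) :
    (∑ σ : Fin A → Fin m, ‖(A : ℝ)⁻¹ • ∑ l, (w (σ l) - (m : ℝ)⁻¹ • ∑ i, w i)‖ ^ 2)
        / ((m : ℝ) ^ A)
      ≤ C ^ 2 / A := by
  have hm' : (m : ℝ) ≠ 0 := Nat.cast_ne_zero.mpr hm.ne'
  have hA' : (A : ℝ) ≠ 0 := Nat.cast_ne_zero.mpr hA.ne'
  have hmpos : (0 : ℝ) < m := Nat.cast_pos.mpr hm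
  have hApos : (0 : ℝ) < A := Nat.cast_pos.mpr hA
  set c : V := (m : ℝ)⁻¹ • ∑ i, w i with hc
  set v : Fin m → V := fun j => w j - c with hv
  have hsum : ∑ j, w j = (m : ℝ) • c := by
    rw [hc, smul_smul, mul_inv_cancel₀ hm', one_smul]
  have hv0 : ∑ j, v j = 0 := by
    simp only [hv, Finset.sum_sub_distrib, hsum, Finset.sum_const, card_univ,
      Fintype.card_fin, sub_eq_zero, Nat.cast_smul_eq_nsmul]
  have key := sum_sq_tuple v hv0 A
  have hC0 : 0 ≤ C := le_trans (norm_nonneg _) (hw ⟨0, hm⟩)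
  have hvb : ∑ j, ‖v j‖ ^ 2 ≤ (m : ℝ) * C ^ 2 := by
    have hin : ⟪∑ j, w j, c⟫ = (m : ℝ) * ‖c‖ ^ 2 := by
      rw [hsum, real_inner_smul_left, real_inner_self_eq_norm_sq]
    have hexp : ∑ j, ‖v j‖ ^ 2 = (∑ j, ‖w j‖ ^ 2) - (m : ℝ) * ‖c‖ ^ 2 := by
      have e : ∀ j : Fin m, ‖v j‖ ^ 2
          = ‖w j‖ ^ 2 - 2 * ⟪w j, c⟫ + ‖c‖ ^ 2 := fun j => by
        rw [hv]; exact norm_sub_sq_real _ _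
      rw [Finset.sum_congr rfl fun j _ => e j, Finset.sum_add_distrib,
        Finset.sum_sub_distrib, ← Finset.mul_sum, ← sum_inner, hin,
        Finset.sum_const, card_univ, Fintype.card_fin, nsmul_eq_mul]
      ring
    have hwb : ∑ j, ‖w j‖ ^ 2 ≤ (m : ℝ) * C ^ 2 := by
      calc ∑ j, ‖w j‖ ^ 2 ≤ ∑ _j : Fin m, C ^ 2 :=
            Finset.sum_le_sum fun j _ => pow_le_pow_left₀ (norm_nonneg _) (hw j) 2
        _ = (m : ℝ) * C ^ 2 := by
            rw [Finset.sum_const, card_univ, Fintype.card_fin, nsmul_eq_mul]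
    nlinarith [sq_nonneg ‖c‖]
  have hterm : ∀ σ : Fin A → Fin m,
      ‖(A : ℝ)⁻¹ • ∑ l, (w (σ l) - c)‖ ^ 2
        = ((A : ℝ)⁻¹) ^ 2 * ‖∑ l, v (σ l)‖ ^ 2 := by
    intro σ
    rw [norm_smul, mul_pow, norm_inv, Real.norm_natCast]
  calc (∑ σ : Fin A → Fin m, ‖(A : ℝ)⁻¹ • ∑ l, (w (σ l) - c)‖ ^ 2) / ((m : ℝ) ^ A)
      = (((A : ℝ)⁻¹) ^ 2 * ∑ σ : Fin A → Fin m, ‖∑ l, v (σ l)‖ ^ 2) / ((m : ℝ) ^ A) := by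
        rw [Finset.sum_congr rfl fun σ _ => hterm σ, ← Finset.mul_sum]
    _ = (∑ j, ‖v j‖ ^ 2) / ((A : ℝ) * m) := by
        have hT : (∑ σ : Fin A → Fin m, ‖∑ l, v (σ l)‖ ^ 2)
            = (A : ℝ) * (m : ℝ) ^ A * (∑ j, ‖v j‖ ^ 2) / m := by
          rw [eq_div_iff hm']; exact key
        rw [hT]
        field_simp
    _ ≤ C ^ 2 / A := by
        rw [div_le_div_iff₀ (mul_pos hApos hmpos) hApos]
        nlinarith [mul_le_mul_of_nonneg_right hvb hApos.le]

/-- Variance of the SVRG estimator of the partial gradient of `G`. -/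
theorem svrg_jacobian_variance
    {m N M A : ℕ} (hm : 0 < m) (hA : 0 < A) (LG : ℝ)
    (G : Fin m → Euc N → Euc M)
    (J : Fin m → Euc N → (Euc N →L[ℝ] Euc M))
    (hJ : ∀ j (x : Euc N), HasFDerivAt (G j) (J j x) x)
    (hJc : ∀ j, Continuous (J j))
    (hJLip : ∀ j (x x' : Euc N), frobNorm (J j x - J j x') ≤ LG * ‖x - x'‖)
    (x xt : Euc N) :
    Esig (fun σ : Fin A → Fin m => frobNorm (JhatSVRG J σ x xt - Jbar J x) ^ 2)
      ≤ LG ^ 2 * (1 / (A : ℝ)) * ‖x - xt‖ ^ 2 := by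
  have hA' : (A : ℝ) ≠ 0 := Nat.cast_ne_zero.mpr hA.ne'
  have hvec : ∀ σ : Fin A → Fin m,
      colMap N M (JhatSVRG J σ x xt - Jbar J x)
        = (A : ℝ)⁻¹ • ∑ l, (colMap N M (J (σ l) x - J (σ l) xt)
            - (m : ℝ)⁻¹ • ∑ i, colMap N M (J i x - J i xt)) := by
    intro σ
    have h1 : JhatSVRG J σ x xt - Jbar J x
        = ((A : ℝ)⁻¹ • ∑ l, (J (σ l) x - J (σ l) xt))
          - (m : ℝ)⁻¹ • ∑ i, (J i x - J i xt) := by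
      simp only [JhatSVRG, Jbar, Finset.sum_sub_distrib, smul_sub]
      abel
    rw [smul_sum_sub_const hA, h1, map_sub, map_smul, map_smul, map_sum, map_sum]
  have heq : Esig (fun σ : Fin A → Fin m => frobNorm (JhatSVRG J σ x xt - Jbar J x) ^ 2)
      = (∑ σ : Fin A → Fin m, ‖(A : ℝ)⁻¹ • ∑ l, (colMap N M (J (σ l) x - J (σ l) xt)
          - (m : ℝ)⁻¹ • ∑ i, colMap N M (J i x - J i xt))‖ ^ 2) / ((m : ℝ) ^ A) := by
    rw [Esig]
    congr 1
    exact Finset.sum_congr rfl fun σ _ => by rw [frob_eq, hvec σ]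
  rw [heq]
  have key := mean_var_bound hm hA (fun j => colMap N M (J j x - J j xt))
      (LG * ‖x - xt‖) (fun j => by rw [← frob_eq]; exact hJLip j x xt)
  refine le_trans key (le_of_eq ?_)
  rw [div_eq_mul_inv, one_div]
  ring
end
end

section
/- Variance of the SAGA estimator of the partial gradient of G: Suppose each Jacobian ∂G_j is L_G-Lipschitz in Frobenius norm, i.e. ‖∂G_j(x) − ∂G_j(x′)‖_F ≤ L_G‖x − x′‖ for all x, x′ ∈ ℝ^N and all j. Then for every x ∈ ℝ^N, every table φ = (φ_1,…,φ_m) of points of ℝ^N, and every integer A ≥ 1, E_σ[ ‖∂Ĝ(σ,x,φ) − ∂G(x)‖_F² ] ≤ L_G² · (1/A) · (1/m)∑_{j=1}^m ‖x − φ_j‖². -/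
noncomputable section

open Finset
open scoped RealInnerProductSpace

/-- The SAGA estimator `Ĝ(σ,x,φ)` of the inner function. -/
def GhatSAGA {m N M : ℕ} (G : Fin m → Euc N → Euc M) {A : ℕ}
    (σ : Fin A → Fin m) (x : Euc N) (φ : Fin m → Euc N) : Euc M :=
  (A : ℝ)⁻¹ • ∑ l, (G (σ l) x - G (σ l) (φ (σ l))) + (m : ℝ)⁻¹ • ∑ j, G j (φ j)

/-- The SAGA estimator `∂Ĝ(σ,x,φ)` of the Jacobian. -/
def JhatSAGA {m N M : ℕ} (J : Fin m → Euc N → (Euc N →L[ℝ] Euc M)) {A : ℕ}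
    (σ : Fin A → Fin m) (x : Euc N) (φ : Fin m → Euc N) : Euc N →L[ℝ] Euc M :=
  (A : ℝ)⁻¹ • ∑ l, (J (σ l) x - J (σ l) (φ (σ l))) + (m : ℝ)⁻¹ • ∑ j, J j (φ j)

set_option maxHeartbeats 1000000

section Aux
variable {E : Type*} [NormedAddCommGroup E] [InnerProductSpace ℝ E]

lemma sumT {m : ℕ} (hm : 0 < m) (v : Fin m → E) (hv : ∑ j, v j = 0) :
    ∀ A : ℕ, ∑ σ : Fin A → Fin m, ‖∑ l, v (σ l)‖ ^ 2
      = (A : ℝ) * (m : ℝ) ^ A / m * ∑ j, ‖v j‖ ^ 2 := by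
  intro A
  induction A with
  | zero => simp
  | succ A ih =>
    have key : ∑ σ : Fin (A+1) → Fin m, ‖∑ l, v (σ l)‖ ^ 2
        = ∑ a : Fin m, ∑ g : Fin A → Fin m, ‖v a + ∑ l, v (g l)‖ ^ 2 := by
      rw [← (Fin.consEquiv (fun _ : Fin (A+1) => Fin m)).sum_comp
        (fun σ => ‖∑ l, v (σ l)‖ ^ 2), Fintype.sum_prod_type]
      refine Finset.sum_congr rfl fun a _ => Finset.sum_congr rfl fun g _ => ?_
      simp [Fin.sum_univ_succ, Fin.consEquiv]
    rw [key]
    have expand : ∀ a : Fin m, ∑ g : Fin A → Fin m, ‖v a + ∑ l, v (g l)‖ ^ 2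
        = (m:ℝ)^A * ‖v a‖^2 + 2 * ⟪v a, ∑ g : Fin A → Fin m, ∑ l, v (g l)⟫
          + ∑ g : Fin A → Fin m, ‖∑ l, v (g l)‖ ^ 2 := by
      intro a
      simp_rw [norm_add_sq_real, Finset.sum_add_distrib, Finset.sum_const,
        Finset.card_univ, Fintype.card_fun, Fintype.card_fin, nsmul_eq_mul,
        inner_sum, Finset.mul_sum]
      push_cast
      ring
    simp_rw [expand]
    rw [Finset.sum_add_distrib, Finset.sum_add_distrib, ← Finset.mul_sum]
    have h2 : ∑ a : Fin m, 2 * ⟪v a, ∑ g : Fin A → Fin m, ∑ l, v (g l)⟫ = 0 := by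
      rw [← Finset.mul_sum, ← sum_inner, hv, inner_zero_left, mul_zero]
    rw [h2, Finset.sum_const, Finset.card_univ, Fintype.card_fin, nsmul_eq_mul, ih]
    have hm' : (m:ℝ) ≠ 0 := Nat.cast_ne_zero.mpr hm.ne'
    field_simp
    push_cast
    ring

lemma esig_var {m A : ℕ} (hm : 0 < m) (hA : 0 < A) (v : Fin m → E)
    (hv : ∑ j, v j = 0) :
    Esig (fun σ : Fin A → Fin m => ‖(A:ℝ)⁻¹ • ∑ l, v (σ l)‖ ^ 2)
      = (A : ℝ)⁻¹ * ((m : ℝ)⁻¹ * ∑ j, ‖v j‖ ^ 2) := by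
  have hm' : (m:ℝ) ≠ 0 := Nat.cast_ne_zero.mpr hm.ne'
  have hA' : (A:ℝ) ≠ 0 := Nat.cast_ne_zero.mpr hA.ne'
  unfold Esig
  simp_rw [norm_smul, mul_pow, norm_inv, Real.norm_natCast]
  rw [← Finset.mul_sum, sumT hm v hv A]
  field_simp

lemma sum_sq_sub_mean_le {m : ℕ} (hm : 0 < m) (u : Fin m → E) :
    ∑ j, ‖u j - (m:ℝ)⁻¹ • ∑ k, u k‖ ^ 2 ≤ ∑ j, ‖u j‖ ^ 2 := by
  have hm' : (m:ℝ) ≠ 0 := Nat.cast_ne_zero.mpr hm.ne'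
  set s := ∑ k, u k with hs
  have key : ∑ j, ‖u j - (m:ℝ)⁻¹ • s‖ ^ 2
      = ∑ j, ‖u j‖ ^ 2 - (m:ℝ)⁻¹ * ‖s‖ ^ 2 := by
    simp_rw [norm_sub_sq_real, Finset.sum_add_distrib, Finset.sum_sub_distrib,
      ← Finset.mul_sum, ← sum_inner, ← hs, inner_smul_right,
      real_inner_self_eq_norm_sq, Finset.sum_const, Finset.card_univ,
      Fintype.card_fin, nsmul_eq_mul, norm_smul, norm_inv, Real.norm_natCast,
      mul_pow]
    field_simp
    ring
  rw [key]
  have : 0 ≤ (m:ℝ)⁻¹ * ‖s‖ ^ 2 := by positivity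
  linarith

end Aux

/-- Variance of the SAGA estimator of the partial gradient of `G`. -/
theorem saga_jacobian_variance
    {m N M A : ℕ} (hm : 0 < m) (hA : 0 < A) (LG : ℝ)
    (G : Fin m → Euc N → Euc M)
    (J : Fin m → Euc N → (Euc N →L[ℝ] Euc M))
    (hJ : ∀ j (x : Euc N), HasFDerivAt (G j) (J j x) x)
    (hJc : ∀ j, Continuous (J j))
    (hJLip : ∀ j (x x' : Euc N), frobNorm (J j x - J j x') ≤ LG * ‖x - x'‖)
    (x : Euc N) (φ : Fin m → Euc N) :
    Esig (fun σ : Fin A → Fin m => frobNorm (JhatSAGA J σ x φ - Jbar J x) ^ 2)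
      ≤ LG ^ 2 * (1 / (A : ℝ)) * ((m : ℝ)⁻¹ * ∑ j, ‖x - φ j‖ ^ 2) := by
  have hm' : (m:ℝ) ≠ 0 := Nat.cast_ne_zero.mpr hm.ne'
  have hA' : (A:ℝ) ≠ 0 := Nat.cast_ne_zero.mpr hA.ne'
  have hfrob : ∀ (T : Euc N →L[ℝ] Euc M),
      frobNorm T ^ 2 = ∑ c : Fin N, ‖T (EuclideanSpace.single c 1)‖ ^ 2 :=
    fun T => Real.sq_sqrt (by positivity)
  set D : Fin m → (Euc N →L[ℝ] Euc M) := fun j => J j x - J j (φ j) with hD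
  set Y : Fin m → (Euc N →L[ℝ] Euc M) :=
    fun j => D j - (m:ℝ)⁻¹ • ∑ k, D k with hY
  have hYsum : ∑ j, Y j = 0 := by
    simp only [hY, Finset.sum_sub_distrib, Finset.sum_const, Finset.card_univ,
      Fintype.card_fin]
    rw [← Nat.cast_smul_eq_nsmul ℝ, smul_smul, mul_inv_cancel₀ hm', one_smul,
      sub_self]
  have hrepr : ∀ σ : Fin A → Fin m,
      JhatSAGA J σ x φ - Jbar J x = (A:ℝ)⁻¹ • ∑ l, Y (σ l) := by
    intro σ
    simp only [JhatSAGA, Jbar, hY, hD]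
    simp only [Finset.sum_sub_distrib, Finset.sum_const, Finset.card_univ,
      Fintype.card_fin, smul_sub]
    simp only [← Nat.cast_smul_eq_nsmul ℝ]
    match_scalars <;> field_simp
  have hcol : ∀ c : Fin N, ∑ j, (Y j) (EuclideanSpace.single c 1) = 0 := by
    intro c
    rw [← ContinuousLinearMap.sum_apply, hYsum, ContinuousLinearMap.zero_apply]
  calc Esig (fun σ : Fin A → Fin m => frobNorm (JhatSAGA J σ x φ - Jbar J x) ^ 2)
      = ∑ c : Fin N, Esig (fun σ : Fin A → Fin m =>
          ‖(A:ℝ)⁻¹ • ∑ l, (Y (σ l)) (EuclideanSpace.single c 1)‖ ^ 2) := by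
        unfold Esig
        rw [← Finset.sum_div]
        congr 1
        rw [Finset.sum_comm]
        refine Finset.sum_congr rfl fun σ _ => ?_
        show frobNorm (JhatSAGA J σ x φ - Jbar J x) ^ 2 = _
        rw [hrepr σ, hfrob]
        refine Finset.sum_congr rfl fun c _ => ?_
        simp only [ContinuousLinearMap.smul_apply, ContinuousLinearMap.sum_apply]
    _ = ∑ c : Fin N, (A:ℝ)⁻¹ * ((m:ℝ)⁻¹ *
          ∑ j, ‖(Y j) (EuclideanSpace.single c 1)‖ ^ 2) :=
        Finset.sum_congr rfl fun c _ => esig_var hm hA (fun j => (Y j) (EuclideanSpace.single c 1)) (hcol c)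
    _ = (A:ℝ)⁻¹ * ((m:ℝ)⁻¹ * ∑ j, frobNorm (Y j) ^ 2) := by
        simp_rw [← Finset.mul_sum, hfrob]
        rw [Finset.sum_comm]
    _ ≤ (A:ℝ)⁻¹ * ((m:ℝ)⁻¹ * ∑ j, LG ^ 2 * ‖x - φ j‖ ^ 2) := by
        have h1 : ∑ j, frobNorm (Y j) ^ 2 ≤ ∑ j, frobNorm (D j) ^ 2 := by
          simp_rw [hfrob]
          rw [Finset.sum_comm,
            show (∑ j, ∑ c : Fin N, ‖(D j) (EuclideanSpace.single c 1)‖ ^ 2)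
              = ∑ c : Fin N, ∑ j, ‖(D j) (EuclideanSpace.single c 1)‖ ^ 2
              from Finset.sum_comm]
          refine Finset.sum_le_sum fun c _ => ?_
          have := sum_sq_sub_mean_le hm (fun j => (D j) (EuclideanSpace.single c 1))
          simpa [hY, ContinuousLinearMap.sub_apply, ContinuousLinearMap.smul_apply,
            ContinuousLinearMap.sum_apply] using this
        have h2 : ∀ j, frobNorm (D j) ^ 2 ≤ LG ^ 2 * ‖x - φ j‖ ^ 2 := by
          intro j
          have hl : frobNorm (D j) ≤ LG * ‖x - φ j‖ := by
            rw [hD]; exact hJLip j x (φ j)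
          have h0 : 0 ≤ frobNorm (D j) := Real.sqrt_nonneg _
          nlinarith [norm_nonneg (x - φ j)]
        have h3 : ∑ j, frobNorm (Y j) ^ 2 ≤ ∑ j, LG ^ 2 * ‖x - φ j‖ ^ 2 :=
          h1.trans (Finset.sum_le_sum fun j _ => h2 j)
        exact mul_le_mul_of_nonneg_left
          (mul_le_mul_of_nonneg_left h3 (by positivity)) (by positivity)
    _ = LG ^ 2 * (1 / (A : ℝ)) * ((m : ℝ)⁻¹ * ∑ j, ‖x - φ j‖ ^ 2) := by
        rw [← Finset.mul_sum]
        ring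
end
end

section
/- Bound on the average squared gradient deviation via the objective gap (appendix Lemma 4): Suppose Assumption 3 holds with constant L_f > 0, let λ > 0, R(x) := (λ/2)‖x‖², P(x) := F(G(x)) + R(x), and let x* ∈ ℝ^N satisfy ∇P(x*) = 0 (equivalently (∂G(x*))^T∇F(G(x*)) + λx* = 0). Then for every x ∈ ℝ^N, (1/n)∑_{i=1}^n ‖(∂G(x))^T∇F_i(G(x)) − (∂G(x*))^T∇F_i(G(x*))‖² ≤ 2L_f·( P(x) − P(x*) − (λ/2)‖x − x*‖² ). -/
noncomputable section

open Finset
open scoped RealInnerProductSpace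

/-- Appendix Lemma 4: bound on the average squared gradient deviation via the
objective gap. -/
theorem avg_squared_gradient_deviation_via_gap
    {n m N M : ℕ} (hn : 0 < n) (hm : 0 < m)
    (Lf lam : ℝ) (hLf : 0 < Lf) (hlam : 0 < lam)
    (Fi : Fin n → Euc M → ℝ) (G : Fin m → Euc N → Euc M)
    (J : Fin m → Euc N → (Euc N →L[ℝ] Euc M)) (gradF : Fin n → Euc M → Euc M)
    (hsm : SmoothData Fi G J gradF)
    (hA3 : ∀ (i : Fin n) (x y : Euc N),
      ‖transApp (Jbar J x) (gradF i (Gbar G x)) -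
        transApp (Jbar J y) (gradF i (Gbar G y))‖ ^ 2 / (2 * Lf)
        ≤ Fi i (Gbar G x) - Fi i (Gbar G y) -
            ⟪transApp (Jbar J y) (gradF i (Gbar G y)), x - y⟫)
    (xstar : Euc N)
    (hcrit : ((n : ℝ)⁻¹ • ∑ i, transApp (Jbar J xstar) (gradF i (Gbar G xstar)))
        + lam • xstar = 0)
    (x : Euc N) :
    (n : ℝ)⁻¹ * ∑ i,
        ‖transApp (Jbar J x) (gradF i (Gbar G x)) -
          transApp (Jbar J xstar) (gradF i (Gbar G xstar))‖ ^ 2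
      ≤ 2 * Lf *
          (((n : ℝ)⁻¹ * ∑ i, Fi i (Gbar G x) + lam / 2 * ‖x‖ ^ 2) -
            ((n : ℝ)⁻¹ * ∑ i, Fi i (Gbar G xstar) + lam / 2 * ‖xstar‖ ^ 2) -
            lam / 2 * ‖x - xstar‖ ^ 2) := by
  have hn' : (0:ℝ) < (n:ℝ) := by exact_mod_cast hn
  have h2Lf : (0:ℝ) < 2 * Lf := by positivity
  set g : Fin n → Euc N := fun i => transApp (Jbar J xstar) (gradF i (Gbar G xstar)) with hg
  have hcrit' : (n:ℝ)⁻¹ • (∑ i, g i) = -(lam • xstar) :=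
    eq_neg_of_add_eq_zero_left hcrit
  have hinner : (n:ℝ)⁻¹ * ∑ i, ⟪g i, x - xstar⟫ = -(lam * ⟪xstar, x - xstar⟫) := by
    have h := congrArg (fun v : Euc N => ⟪v, x - xstar⟫) hcrit'
    simp only [sum_inner, real_inner_smul_left, inner_neg_left] at h
    simpa using h
  have h1 : ∑ i, ‖transApp (Jbar J x) (gradF i (Gbar G x)) - g i‖ ^ 2 / (2 * Lf)
      ≤ ∑ i, (Fi i (Gbar G x) - Fi i (Gbar G xstar) - ⟪g i, x - xstar⟫) :=
    Finset.sum_le_sum fun i _ => hA3 i x xstar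
  have hLHS : (n:ℝ)⁻¹ * ∑ i, ‖transApp (Jbar J x) (gradF i (Gbar G x)) - g i‖ ^ 2
      = 2 * Lf * ((n:ℝ)⁻¹ * ∑ i, ‖transApp (Jbar J x) (gradF i (Gbar G x)) - g i‖ ^ 2 / (2 * Lf)) := by
    rw [← Finset.sum_div]
    field_simp
  have hsq : ‖x - xstar‖ ^ 2 = ‖x‖ ^ 2 - 2 * ⟪x, xstar⟫ + ‖xstar‖ ^ 2 :=
    norm_sub_sq_real x xstar
  have hip : ⟪xstar, x - xstar⟫ = ⟪x, xstar⟫ - ‖xstar‖ ^ 2 := by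
    rw [inner_sub_right, real_inner_self_eq_norm_sq, real_inner_comm]
  have hRHS : (((n : ℝ)⁻¹ * ∑ i, Fi i (Gbar G x) + lam / 2 * ‖x‖ ^ 2) -
        ((n : ℝ)⁻¹ * ∑ i, Fi i (Gbar G xstar) + lam / 2 * ‖xstar‖ ^ 2) -
        lam / 2 * ‖x - xstar‖ ^ 2)
      = (n:ℝ)⁻¹ * ∑ i, (Fi i (Gbar G x) - Fi i (Gbar G xstar) - ⟪g i, x - xstar⟫) := by
    rw [Finset.sum_sub_distrib, Finset.sum_sub_distrib, mul_sub, mul_sub, hinner, hsq]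
    rw [hip]
    ring
  rw [hLHS, hRHS]
  exact mul_le_mul_of_nonneg_left (mul_le_mul_of_nonneg_left h1 (by positivity)) (le_of_lt h2Lf)
end
end
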